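/- Let β > −1/2 be real, k ∈ ℕ, and let g_k(x) = √(k!/Γ(k+2β+1)) · x^β e^{−x/2} L_k^{(2β)}(x) be the k-th Laguerre function with parameter 2β on (0,∞). Then for every z ∈ ℂ with |z| < 1, (1−z)^{−(2β+1)} ∫_0^∞ g_k(x) · x^β e^{−(x/2)·(1+z)/(1−z)} dx = √(Γ(k+2β+1)/k!) · z^k. In other words, the Bergman transform of the unit disc maps the Laguerre functions to the monomials √(Γ(k+2β+1)/k!)·z^k. -/

import Mathlib

open MeasureTheory Real Nat

/-- The generalized Laguerre polynomial
`L_k^{(α)}(x) = Σ_{j=0}^{k} (Γ(k+α+1)/Γ(j+α+1)) · (−x)^j/((k−j)!·j!)`. -/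
noncomputable def laguerre (α : ℝ) (k : ℕ) (x : ℝ) : ℝ :=
  ∑ j ∈ Finset.range (k + 1),
    Real.Gamma ((k : ℝ) + α + 1) / Real.Gamma ((j : ℝ) + α + 1) * (-x) ^ j /
      (((k - j)! : ℝ) * (j ! : ℝ))

/-- The `k`-th Laguerre function with parameter `2β` on `(0,∞)`:
`g_k(x) = √(k!/Γ(k+2β+1)) · x^β e^{−x/2} L_k^{(2β)}(x)`. -/
noncomputable def laguerreFun (β : ℝ) (k : ℕ) (x : ℝ) : ℝ :=
  Real.sqrt ((k ! : ℝ) / Real.Gamma ((k : ℝ) + 2 * β + 1)) * x ^ β * Real.exp (-x / 2) *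
    laguerre (2 * β) k x

section BergmanAux

open MeasureTheory Real Set Filter

lemma intOn_rpow_exp {t : ℝ} (ht : -1 < t) {b : ℝ} (hb : 0 < b) :
    IntegrableOn (fun x : ℝ => x ^ t * Real.exp (-b * x)) (Set.Ioi 0) := by
  have h := integrableOn_rpow_mul_exp_neg_mul_rpow ht zero_lt_one hb
  refine h.congr_fun (fun x hx => ?_) measurableSet_Ioi
  simp only [Real.rpow_one]

lemma aesm_cpow_cexp (t : ℝ) (c : ℂ) :
    AEStronglyMeasurable (fun x : ℝ => (x : ℂ) ^ (t : ℂ) * Complex.exp (-(c * x)))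
      (volume.restrict (Set.Ioi 0)) := by
  refine ContinuousOn.aestronglyMeasurable ?_ measurableSet_Ioi
  refine ContinuousOn.mul ?_ (Continuous.continuousOn (by continuity))
  intro x hx
  exact (Complex.continuousAt_ofReal_cpow_const x _ (Or.inr (ne_of_gt hx))).continuousWithinAt

lemma intOn_cpow_cexp {t : ℝ} (ht : -1 < t) {c : ℂ} (hc : 0 < c.re) :
    IntegrableOn (fun x : ℝ => (x : ℂ) ^ (t : ℂ) * Complex.exp (-(c * x))) (Set.Ioi 0) := by
  refine Integrable.mono' (intOn_rpow_exp ht hc) (aesm_cpow_cexp t c) ?_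
  filter_upwards [ae_restrict_mem measurableSet_Ioi] with x hx
  rw [norm_mul, Complex.norm_cpow_eq_rpow_re_of_pos hx,
    Complex.ofReal_re, Complex.norm_exp]
  have : (-(c * (x:ℂ))).re = -c.re * x := by
    simp [Complex.mul_re]
  rw [this]


open MeasureTheory Real Set Filter Metric

lemma hasDerivAt_int_cpow_cexp {t : ℝ} (ht : -1 < t) {c₀ : ℂ} (hc₀ : 0 < c₀.re) :
    HasDerivAt (fun c : ℂ => ∫ x : ℝ in Set.Ioi 0, (x : ℂ) ^ (t : ℂ) * Complex.exp (-(c * x)))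
      (∫ x : ℝ in Set.Ioi 0, (x : ℂ) ^ (t : ℂ) * (Complex.exp (-(c₀ * x)) * -(x:ℂ))) c₀ := by
  set ε := c₀.re / 2 with hε
  have hεpos : 0 < ε := half_pos hc₀
  have key := hasDerivAt_integral_of_dominated_loc_of_deriv_le (μ := volume.restrict (Set.Ioi 0))
    (F := fun (c : ℂ) (x : ℝ) => (x : ℂ) ^ (t : ℂ) * Complex.exp (-(c * x)))
    (F' := fun (c : ℂ) (x : ℝ) => (x : ℂ) ^ (t : ℂ) * (Complex.exp (-(c * x)) * -(x:ℂ)))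
    (x₀ := c₀) (bound := fun x : ℝ => x ^ (t+1) * Real.exp (-ε * x)) (Metric.ball_mem_nhds c₀ hεpos)
    (Eventually.of_forall fun c => aesm_cpow_cexp t c) (intOn_cpow_cexp ht hc₀) ?_ ?_ ?_ ?_
  · exact key.2
  · -- measurability of F' c₀
    refine ContinuousOn.aestronglyMeasurable ?_ measurableSet_Ioi
    refine ContinuousOn.mul ?_ (Continuous.continuousOn (by continuity))
    intro x hx
    exact (Complex.continuousAt_ofReal_cpow_const x _ (Or.inr (ne_of_gt hx))).continuousWithinAt
  · -- bound
    filter_upwards [ae_restrict_mem measurableSet_Ioi] with x hx c hc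
    have hcre : ε ≤ c.re := by
      have h1 : |(c - c₀).re| ≤ ‖c - c₀‖ := Complex.abs_re_le_norm _
      have h2 : ‖c - c₀‖ < ε := by rwa [mem_ball, dist_eq_norm] at hc
      have := abs_le.mp h1
      have : c₀.re - c.re ≤ ε := by
        have := this.1
        simp only [Complex.sub_re] at this
        linarith [h2, this]
      linarith
    rw [norm_mul, norm_mul, Complex.norm_cpow_eq_rpow_re_of_pos hx,
      Complex.ofReal_re, Complex.norm_exp, norm_neg,
      Complex.norm_real, Real.norm_eq_abs, abs_of_pos hx]
    have hre : (-(c * (x:ℂ))).re = -c.re * x := by simp [Complex.mul_re]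
    rw [hre, Real.rpow_add_one (ne_of_gt hx)]
    have : Real.exp (-c.re * x) ≤ Real.exp (-ε * x) := by
      apply Real.exp_le_exp.mpr
      have := (show (0:ℝ) < x from hx).le
      nlinarith
    calc x ^ t * (Real.exp (-c.re * x) * x) = (x ^ t * x) * Real.exp (-c.re * x) := by ring
      _ ≤ x ^ t * x * Real.exp (-ε * x) := by
          apply mul_le_mul_of_nonneg_left this
          have h0 := Real.rpow_nonneg hx.le t
          have := (show (0:ℝ) < x from hx).le
          positivity
  · exact intOn_rpow_exp (by linarith) hεpos
  · -- differentiability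
    filter_upwards [ae_restrict_mem measurableSet_Ioi] with x hx c hc
    have h1 : HasDerivAt (fun c : ℂ => -(c * x)) (-(x:ℂ)) c := by
      exact (by simpa using ((hasDerivAt_id c).mul_const (x:ℂ)).neg : HasDerivAt (-fun y : ℂ => y * (x:ℂ)) (-(x:ℂ)) c)
    exact (h1.cexp).const_mul _


open MeasureTheory Real Set Filter

lemma freal_case {t : ℝ} (ht : -1 < t) {r : ℝ} (hr : 0 < r) :
    ∫ x : ℝ in Set.Ioi 0, (x : ℂ) ^ (t : ℂ) * Complex.exp (-((r:ℂ) * x))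
      = (Real.Gamma (t + 1) : ℂ) * (r:ℂ) ^ (-((t : ℂ) + 1)) := by
  have ha : 0 < ((t:ℂ)+1).re := by simp; linarith
  have h := Complex.integral_cpow_mul_exp_neg_mul_Ioi ha hr
  simp only [add_sub_cancel_right] at h
  rw [h, one_div,
    Complex.inv_cpow _ _ (by rw [Complex.arg_ofReal_of_nonneg hr.le]; exact Real.pi_ne_zero.symm),
    ← Complex.cpow_neg]
  have hG : Complex.Gamma ((t:ℂ)+1) = (Real.Gamma (t+1) : ℂ) := by
    rw [← Complex.Gamma_ofReal]; push_cast; ring_nf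
  rw [hG]; ring

lemma integral_cpow_mul_cexp {t : ℝ} (ht : -1 < t) {c : ℂ} (hc : 0 < c.re) :
    ∫ x : ℝ in Set.Ioi 0, (x : ℂ) ^ (t : ℂ) * Complex.exp (-(c * x))
      = (Real.Gamma (t + 1) : ℂ) * c ^ (-((t : ℂ) + 1)) := by
  set U : Set ℂ := {w : ℂ | 0 < w.re} with hU
  set f : ℂ → ℂ := fun w => ∫ x : ℝ in Set.Ioi 0, (x : ℂ) ^ (t : ℂ) * Complex.exp (-(w * x))
    with hfdef
  set g : ℂ → ℂ := fun w => (Real.Gamma (t + 1) : ℂ) * w ^ (-((t : ℂ) + 1)) with hgdef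
  have hUopen : IsOpen U := isOpen_lt continuous_const Complex.continuous_re
  have hUconn : IsPreconnected U := (convex_halfSpace_re_gt 0).isPreconnected
  have hf : AnalyticOnNhd ℂ f U := by
    refine DifferentiableOn.analyticOnNhd (fun w hw => ?_) hUopen
    exact ((hasDerivAt_int_cpow_cexp ht hw).differentiableAt).differentiableWithinAt
  have hg : AnalyticOnNhd ℂ g U := by
    refine DifferentiableOn.analyticOnNhd
      (fun w hw => DifferentiableAt.differentiableWithinAt ?_) hUopen
    refine DifferentiableAt.const_mul ?_ _
    exact DifferentiableAt.cpow differentiableAt_id (differentiableAt_const _)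
      (Complex.mem_slitPlane_iff.mpr (Or.inl hw))
  have h1U : (1:ℂ) ∈ U := by simp [hU]
  have hfreq : ∃ᶠ w in nhdsWithin (1:ℂ) {(1:ℂ)}ᶜ, f w = g w := by
    have hu : Tendsto (fun n : ℕ => ((1 + ((n:ℝ)+1)⁻¹ : ℝ) : ℂ)) atTop (nhdsWithin 1 {(1:ℂ)}ᶜ) := by
      rw [tendsto_nhdsWithin_iff]
      constructor
      · have h1 : Tendsto (fun n : ℕ => (1 + ((n:ℝ)+1)⁻¹ : ℝ)) atTop (nhds 1) := by
          have := tendsto_one_div_add_atTop_nhds_zero_nat (𝕜 := ℝ)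
          simp only [one_div] at this
          simpa using tendsto_const_nhds.add this
        have h2 := (Complex.continuous_ofReal.tendsto (1:ℝ)).comp h1
        rw [Complex.ofReal_one] at h2
        exact h2
      · filter_upwards with n
        simp only [Set.mem_compl_iff, Set.mem_singleton_iff]
        intro hcon
        have : (1 + ((n:ℝ)+1)⁻¹ : ℝ) = 1 := by exact_mod_cast hcon
        have hp : (0:ℝ) < ((n:ℝ)+1)⁻¹ := by positivity
        linarith
    refine hu.frequently (Frequently.of_forall (fun n => ?_))
    have hrpos : (0:ℝ) < 1 + ((n:ℝ)+1)⁻¹ := by positivity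
    exact freal_case ht hrpos
  exact hf.eqOn_of_preconnected_of_frequently_eq hg hUconn h1U hfreq hc

end BergmanAux

/-- The Bergman transform of the unit disc maps the Laguerre functions to monomials:
for `β > −1/2`, `k ∈ ℕ` and `|z| < 1`,
`(1−z)^{−(2β+1)} ∫_0^∞ g_k(x) x^β e^{−(x/2)(1+z)/(1−z)} dx = √(Γ(k+2β+1)/k!) · z^k`. -/
theorem bergmanTransform_laguerreFun (β : ℝ) (hβ : -(1 / 2) < β) (k : ℕ) (z : ℂ)
    (hz : ‖z‖ < 1) :
    (1 - z) ^ (-(2 * (β : ℂ) + 1)) *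
        ∫ x in Set.Ioi (0 : ℝ),
          ((laguerreFun β k x : ℝ) : ℂ) * (((x : ℝ) ^ β : ℝ) : ℂ) *
            Complex.exp (-((x : ℂ) / 2) * (1 + z) / (1 - z)) =
      ((Real.sqrt (Real.Gamma ((k : ℝ) + 2 * β + 1) / (k ! : ℝ)) : ℝ) : ℂ) * z ^ k := by
  -- basic facts
  have h1z : (1 : ℂ) - z ≠ 0 := by
    intro h
    have : z = 1 := by linear_combination -h
    rw [this] at hz; simp at hz
  set c : ℂ := (1 - z)⁻¹ with hcdef
  have hc0 : c ≠ 0 := inv_ne_zero h1z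
  have hcre : 0 < c.re := by
    rw [hcdef, Complex.inv_re]
    apply _root_.div_pos
    · have h2 := abs_le.mp (Complex.abs_re_le_norm z)
      have habs : ‖z‖ < 1 := hz
      simp only [Complex.sub_re, Complex.one_re]
      linarith [h2.2]
    · exact Complex.normSq_pos.mpr h1z
  have hzre' := abs_le.mp (Complex.abs_re_le_norm z)
  have habs : ‖z‖ < 1 := hz
  have harg : (1 - z).arg ≠ Real.pi := by
    intro h
    have h3 := (Complex.arg_eq_pi_iff.mp h).1
    simp only [Complex.sub_re, Complex.one_re] at h3
    linarith [hzre'.2]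
  set Γk : ℝ := Real.Gamma ((k : ℝ) + 2 * β + 1) with hΓk
  have hΓkpos : 0 < Γk := Real.Gamma_pos_of_pos (by have : (0:ℝ) ≤ (k:ℝ) := Nat.cast_nonneg k; linarith)
  set C : ℝ := Real.sqrt ((k ! : ℝ) / Γk) with hC
  set A : ℕ → ℂ := fun j =>
    (C : ℂ) * ((Γk : ℂ) / ((Real.Gamma ((j : ℝ) + 2 * β + 1) : ℝ) : ℂ)) * (-1) ^ j /
      ((((k - j)! : ℕ) : ℂ) * (((j !) : ℕ) : ℂ)) with hA
  -- pointwise rewriting of the integrand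
  have hpt : ∀ x ∈ Set.Ioi (0 : ℝ),
      ((laguerreFun β k x : ℝ) : ℂ) * (((x : ℝ) ^ β : ℝ) : ℂ) *
          Complex.exp (-((x : ℂ) / 2) * (1 + z) / (1 - z))
        = ∑ j ∈ Finset.range (k + 1),
            A j * ((x : ℂ) ^ ((2 * β + (j : ℝ) : ℝ) : ℂ) * Complex.exp (-(c * (x : ℂ)))) := by
    intro x hx
    have hx0 : (0:ℝ) < x := hx
    have hexp : Complex.exp (-(x:ℂ)/2) * Complex.exp (-((x:ℂ)/2) * (1+z)/(1-z))
        = Complex.exp (-(c * (x:ℂ))) := by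
      rw [← Complex.exp_add]
      congr 1
      rw [hcdef]
      push_cast
      field_simp
      ring
    have hpow : ∀ j : ℕ, (x : ℂ) ^ (2 * (β:ℂ) + (j:ℂ))
        = (((x:ℝ) ^ β : ℝ) : ℂ) * (((x:ℝ) ^ β : ℝ) : ℂ) * ((x:ℂ)) ^ j := by
      intro j
      rw [show (2 * (β:ℂ) + (j:ℂ)) = ((2 * β + (j:ℝ) : ℝ) : ℂ) from by push_cast; ring]
      rw [← Complex.ofReal_cpow hx0.le]
      rw [show (2*β + (j:ℝ)) = β + (β + (j:ℝ)) from by ring, Real.rpow_add hx0,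
        Real.rpow_add hx0, Real.rpow_natCast]
      push_cast
      ring
    rw [laguerreFun, laguerre]
    push_cast
    simp only [Finset.sum_mul, Finset.mul_sum]
    refine Finset.sum_congr rfl fun j hj => ?_
    rw [hA]
    simp only []
    rw [hpow j, ← hexp]
    push_cast
    ring
  rw [MeasureTheory.setIntegral_congr_fun measurableSet_Ioi hpt]
  rw [MeasureTheory.integral_finset_sum _ (fun j hj => by
    exact (intOn_cpow_cexp (by have : (0:ℝ) ≤ (j:ℝ) := Nat.cast_nonneg j; linarith) hcre).const_mul (A j))]
  have hstep : ∀ j ∈ Finset.range (k + 1),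
      (∫ x in Set.Ioi (0:ℝ), A j * ((x : ℂ) ^ ((2 * β + (j : ℝ) : ℝ) : ℂ)
          * Complex.exp (-(c * (x : ℂ)))))
        = ((C : ℂ) * (Γk : ℂ) / ((k ! : ℕ) : ℂ)) *
            (((1 - z) ^ (-(2 * (β : ℂ) + 1)))⁻¹ * ((k.choose j : ℂ) * (z - 1) ^ j)) := by
    intro j hj
    have hjk : j ≤ k := Nat.lt_succ_iff.mp (Finset.mem_range.mp hj)
    have hjc : (0:ℝ) ≤ (j:ℝ) := Nat.cast_nonneg j
    rw [integral_const_mul,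
      integral_cpow_mul_cexp (by linarith : (-1:ℝ) < 2 * β + (j:ℝ)) hcre]
    -- decompose the cpow
    have hcp : c ^ (-(((2 * β + (j:ℝ) : ℝ)) : ℂ) - 1)
        = ((1 - z) ^ (-(2 * (β : ℂ) + 1)))⁻¹ * (1 - z) ^ j := by
      have e1 : (-(((2 * β + (j:ℝ) : ℝ)) : ℂ) - 1) = (-(2 * (β:ℂ) + 1)) + (-(j:ℂ)) := by
        push_cast; ring
      rw [e1, Complex.cpow_add _ _ hc0]
      congr 1
      · rw [hcdef, Complex.inv_cpow _ _ harg]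
      · rw [Complex.cpow_neg, Complex.cpow_natCast, hcdef, inv_pow, inv_inv]
    have e2 : (-((((2 * β + (j:ℝ) : ℝ)) : ℂ) + 1)) = (-(((2 * β + (j:ℝ) : ℝ)) : ℂ) - 1) := by ring
    rw [e2, hcp]
    -- Gamma cancellation and choose
    have hΓj : Real.Gamma ((j:ℝ) + 2 * β + 1) ≠ 0 :=
      ne_of_gt (Real.Gamma_pos_of_pos (by linarith))
    have hΓeq : Real.Gamma (2 * β + (j:ℝ) + 1) = Real.Gamma ((j:ℝ) + 2 * β + 1) := by
      ring_nf
    have hchoose : ((k.choose j : ℕ) : ℂ) * ((j ! : ℕ) : ℂ) * (((k - j)! : ℕ) : ℂ)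
        = ((k ! : ℕ) : ℂ) := by
      exact_mod_cast congrArg (Nat.cast : ℕ → ℂ) (Nat.choose_mul_factorial_mul_factorial hjk)
    have hfacj : ((j ! : ℕ) : ℂ) ≠ 0 := Nat.cast_ne_zero.mpr (Nat.factorial_ne_zero j)
    have hfackj : (((k - j)! : ℕ) : ℂ) ≠ 0 := Nat.cast_ne_zero.mpr (Nat.factorial_ne_zero _)
    have hfack : ((k ! : ℕ) : ℂ) ≠ 0 := Nat.cast_ne_zero.mpr (Nat.factorial_ne_zero k)
    have hΓjc : ((Real.Gamma ((j:ℝ) + 2 * β + 1) : ℝ) : ℂ) ≠ 0 :=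
      Complex.ofReal_ne_zero.mpr hΓj
    rw [hA]
    simp only []
    rw [hΓeq]
    have hz1j : (z - 1) ^ j = (-1)^j * (1 - z)^j := by
      rw [show (z - 1) = (-1) * (1 - z) from by ring, mul_pow]
    rw [hz1j]
    have hsc : ((C:ℂ) * ((Γk:ℂ) / ((Real.Gamma ((j:ℝ) + 2 * β + 1) : ℝ):ℂ)) * (-1)^j /
          ((((k - j)! : ℕ):ℂ) * (((j !) : ℕ):ℂ))) * ((Real.Gamma ((j:ℝ) + 2 * β + 1) : ℝ):ℂ)
        = (C:ℂ) * (Γk:ℂ) / ((k ! : ℕ):ℂ) * ((k.choose j : ℕ):ℂ) * (-1)^j := by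
      field_simp
      linear_combination (-((C:ℂ) * (Γk:ℂ))) * hchoose
    linear_combination (((1 - z) ^ (-(2 * (β:ℂ) + 1)))⁻¹ * (1 - z)^j) * hsc
  rw [Finset.sum_congr rfl hstep, ← Finset.mul_sum, ← Finset.mul_sum]
  have hbin : ∑ j ∈ Finset.range (k + 1), ((k.choose j : ℂ) * (z - 1) ^ j) = z ^ k := by
    have := add_pow (z - 1) 1 k
    simp only [one_pow, mul_one] at this
    rw [show z = z - 1 + 1 by ring]
    rw [this]
    exact (Finset.sum_congr rfl fun j hj => by ring)
  rw [hbin]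
  -- final algebra
  have hcpow_ne : (1 - z) ^ (-(2 * (β : ℂ) + 1)) ≠ 0 := by
    rw [Ne, Complex.cpow_eq_zero_iff]
    tauto
  have hconst : (C : ℂ) * (Γk : ℂ) / ((k ! : ℕ) : ℂ)
      = ((Real.sqrt (Γk / (k ! : ℝ)) : ℝ) : ℂ) := by
    have hkf : (0:ℝ) < (k ! : ℝ) := by exact_mod_cast Nat.factorial_pos k
    have hq : (0:ℝ) < Γk / (k ! : ℝ) := by positivity
    have hreal : C * Γk / (k ! : ℝ) = Real.sqrt (Γk / (k ! : ℝ)) := by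
      rw [hC]
      rw [show (k ! : ℝ) / Γk = (Γk / (k ! : ℝ))⁻¹ by field_simp]
      rw [Real.sqrt_inv]
      have hs : Real.sqrt (Γk / (k ! : ℝ)) ≠ 0 := ne_of_gt (Real.sqrt_pos.mpr hq)
      rw [show (Real.sqrt (Γk / ↑k !))⁻¹ * Γk / ↑k ! = (Γk / ↑k !) / Real.sqrt (Γk / ↑k !) from by ring,
        div_eq_iff hs]
      exact (Real.mul_self_sqrt hq.le).symm
    rw [← hreal]; push_cast; ring
  rw [hconst]
  rw [show (1 - z) ^ (-(2 * (β:ℂ) + 1)) *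
      (((Real.sqrt (Γk / (k ! : ℝ)) : ℝ) : ℂ) * (((1 - z) ^ (-(2 * (β:ℂ) + 1)))⁻¹ * z ^ k))
      = ((Real.sqrt (Γk / (k ! : ℝ)) : ℝ) : ℂ) * z ^ k *
        ((1 - z) ^ (-(2 * (β:ℂ) + 1)) * ((1 - z) ^ (-(2 * (β:ℂ) + 1)))⁻¹) from by ring,
    mul_inv_cancel₀ hcpow_ne, mul_one]
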